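/- For all positive real numbers s and r, the integral over t ∈ (0,∞) of e^{−s²t} · e^{−r²/(4t)} / (4πt)^{3/2} dt equals e^{−sr}/(4πr). -/

import Mathlib

open Real MeasureTheory Set

variable {s r : ℝ}

lemma hg_deriv {x : ℝ} (hx : (0:ℝ) < x) :
    HasDerivAt (fun x : ℝ => s * x - r / (2 * x)) (s + r / (2 * x ^ 2)) x := by
  have h1 : HasDerivAt (fun x : ℝ => s * x) s x := by
    simpa using (hasDerivAt_id x).const_mul s
  have h2 : HasDerivAt (fun x : ℝ => r / (2 * x)) (r / 2 * -(x ^ 2)⁻¹) x := by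
    have := (hasDerivAt_inv hx.ne').const_mul (r / 2)
    refine this.congr_of_eventuallyEq (Filter.Eventually.of_forall fun y => ?_)
    show r / (2 * y) = r / 2 * y⁻¹
    ring
  have := h1.sub h2
  exact this.congr_deriv (by ring)

lemma g_inj (hs : 0 < s) (hr : 0 < r) :
    InjOn (fun x : ℝ => s * x - r / (2 * x)) (Ioi 0) := by
  intro x hx y hy h
  simp only [mem_Ioi] at hx hy
  simp only at h
  have key : (x - y) * (2 * s * x * y + r) = 0 := by
    have hx' := hx.ne'
    have hy' := hy.ne'
    field_simp at h
    nlinarith [h]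
  have hpos : 0 < 2 * s * x * y + r := by positivity
  have := mul_eq_zero.mp key
  rcases this with h0 | h0
  · linarith
  · linarith

lemma g_surj (hs : 0 < s) (hr : 0 < r) :
    (fun x : ℝ => s * x - r / (2 * x)) '' (Ioi 0) = univ := by
  apply eq_univ_of_forall
  intro y
  have hw : 0 < Real.sqrt (y ^ 2 + 2 * s * r) := by
    apply Real.sqrt_pos.mpr; positivity
  have hw2 : Real.sqrt (y ^ 2 + 2 * s * r) ^ 2 = y ^ 2 + 2 * s * r :=
    Real.sq_sqrt (by positivity)
  have hwy : -y < Real.sqrt (y ^ 2 + 2 * s * r) := by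
    nlinarith [Real.sqrt_nonneg (y ^ 2 + 2 * s * r), abs_nonneg y, sq_abs y,
      Real.sqrt_le_sqrt (le_refl (y^2 + 2*s*r))]
  refine ⟨(y + Real.sqrt (y ^ 2 + 2 * s * r)) / (2 * s), ?_, ?_⟩
  · simp only [mem_Ioi]
    have : 0 < y + Real.sqrt (y ^ 2 + 2 * s * r) := by linarith
    positivity
  · have hxpos : 0 < (y + Real.sqrt (y ^ 2 + 2 * s * r)) / (2 * s) := by
      have : 0 < y + Real.sqrt (y ^ 2 + 2 * s * r) := by linarith
      positivity
    simp only
    set w := Real.sqrt (y ^ 2 + 2 * s * r) with hwdef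
    have hyw : 0 < y + w := by linarith
    field_simp
    nlinarith [hw2]

lemma h_cont (hr : 0 < r) : ContinuousOn (fun x : ℝ => Real.exp (-(s * x - r / (2 * x)) ^ 2)) (Ioi 0) := by
  apply Real.continuous_exp.comp_continuousOn
  apply ContinuousOn.neg
  apply ContinuousOn.pow
  apply ContinuousOn.sub
  · exact (continuous_const.mul continuous_id).continuousOn
  · exact continuousOn_const.div (continuous_const.mul continuous_id).continuousOn
      (fun x hx => by simp only [mem_Ioi] at hx; positivity)

lemma hL_int (hs : 0 < s) (hr : 0 < r) :
    IntegrableOn (fun x : ℝ => Real.exp (-(s * x - r / (2 * x)) ^ 2)) (Ioi 0) := by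
  have hb : IntegrableOn (fun x : ℝ => Real.exp (s * r) * Real.exp (-s ^ 2 * x ^ 2)) (Ioi 0) :=
    ((integrable_exp_neg_mul_sq (by positivity : (0:ℝ) < s ^ 2)).integrableOn).const_mul _
  apply Integrable.mono' hb ((h_cont hr).aestronglyMeasurable measurableSet_Ioi)
  filter_upwards [ae_restrict_mem measurableSet_Ioi] with x hx
  simp only [mem_Ioi] at hx
  rw [Real.norm_eq_abs, abs_of_pos (Real.exp_pos _), ← Real.exp_add]
  apply Real.exp_le_exp.mpr
  have e1 : s * x * (r / (2 * x)) = s * r / 2 := by field_simp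
  nlinarith [sq_nonneg (r / (2 * x))]

lemma hG_int : Integrable (fun u : ℝ => Real.exp (-u ^ 2)) := by
  simpa using integrable_exp_neg_mul_sq (one_pos)

lemma hM_int (hs : 0 < s) (hr : 0 < r) :
    IntegrableOn (fun x : ℝ => |s + r / (2 * x ^ 2)| *
      Real.exp (-(s * x - r / (2 * x)) ^ 2)) (Ioi 0) := by
  have := (integrableOn_image_iff_integrableOn_abs_deriv_smul measurableSet_Ioi
    (fun x hx => (hg_deriv (mem_Ioi.mp hx)).hasDerivWithinAt) (g_inj hs hr)
    (fun u : ℝ => Real.exp (-u ^ 2))).mp ?_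
  · simpa [smul_eq_mul] using this
  · rw [g_surj hs hr]
    exact hG_int.integrableOn

lemma M_val (hs : 0 < s) (hr : 0 < r) :
    ∫ x in Ioi 0, |s + r / (2 * x ^ 2)| * Real.exp (-(s * x - r / (2 * x)) ^ 2) = Real.sqrt π := by
  have := integral_image_eq_integral_abs_deriv_smul measurableSet_Ioi
    (fun x hx => (hg_deriv (mem_Ioi.mp hx)).hasDerivWithinAt) (g_inj hs hr)
    (fun u : ℝ => Real.exp (-u ^ 2))
  rw [g_surj hs hr, Measure.restrict_univ] at this
  have hg : ∫ u : ℝ, Real.exp (-u ^ 2) = Real.sqrt π := by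
    simpa using integral_gaussian 1
  rw [← hg, this]
  simp [smul_eq_mul]

lemma KL (hs : 0 < s) (hr : 0 < r) :
    ∫ x in Ioi 0, Real.exp (-(s * x - r / (2 * x)) ^ 2) / x ^ 2
      = (2 * s / r) * ∫ x in Ioi 0, Real.exp (-(s * x - r / (2 * x)) ^ 2) := by
  set c : ℝ := r / (2 * s) with hc
  have hcpos : 0 < c := by positivity
  have hf' : ∀ x ∈ Ioi (0:ℝ), HasDerivWithinAt (fun x : ℝ => c / x) (c * -(x ^ 2)⁻¹) (Ioi 0) x := by
    intro x hx
    simp only [mem_Ioi] at hx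
    have := (hasDerivAt_inv hx.ne').const_mul c
    simp only [div_eq_mul_inv]
    exact this.hasDerivWithinAt
  have hinj : InjOn (fun x : ℝ => c / x) (Ioi 0) := by
    intro x hx y hy h
    simp only [mem_Ioi] at hx hy
    simp only at h
    field_simp at h
    exact h.symm
  have himg : (fun x : ℝ => c / x) '' (Ioi 0) = Ioi 0 := by
    ext y
    constructor
    · rintro ⟨x, hx, rfl⟩
      simp only [mem_Ioi] at *
      positivity
    · intro hy
      simp only [mem_Ioi] at hy
      exact ⟨c / y, by simp only [mem_Ioi]; positivity, by field_simp⟩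
  have := integral_image_eq_integral_abs_deriv_smul measurableSet_Ioi hf' hinj
    (fun u : ℝ => Real.exp (-(s * u - r / (2 * u)) ^ 2) / u ^ 2)
  rw [himg] at this
  rw [this, ← integral_const_mul]
  apply setIntegral_congr_fun measurableSet_Ioi
  intro x hx
  simp only [mem_Ioi] at hx
  have hx' : x ≠ 0 := hx.ne'
  simp only [smul_eq_mul]
  rw [mul_neg, abs_neg, abs_of_pos (by positivity : (0:ℝ) < c * (x ^ 2)⁻¹)]
  have harg : s * (c / x) - r / (2 * (c / x)) = -(s * x - r / (2 * x)) := by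
    rw [hc]; field_simp; ring
  rw [harg, neg_sq]
  rw [hc]
  field_simp

lemma hK_int (hs : 0 < s) (hr : 0 < r) :
    IntegrableOn (fun x : ℝ => Real.exp (-(s * x - r / (2 * x)) ^ 2) / x ^ 2) (Ioi 0) := by
  have h1 := (hM_int hs hr).sub ((hL_int hs hr).const_mul s)
  apply IntegrableOn.congr_fun (h1.const_mul (2 / r)) ?_ measurableSet_Ioi
  intro x hx
  simp only [mem_Ioi] at hx
  have hx' : x ≠ 0 := hx.ne'
  simp only [Pi.sub_apply, abs_of_pos (show (0:ℝ) < s + r / (2 * x ^ 2) by positivity)]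
  field_simp
  ring

lemma K_val (hs : 0 < s) (hr : 0 < r) :
    ∫ x in Ioi 0, Real.exp (-(s * x - r / (2 * x)) ^ 2) / x ^ 2 = Real.sqrt π / r := by
  set L := ∫ x in Ioi 0, Real.exp (-(s * x - r / (2 * x)) ^ 2) with hL
  have hsplit : ∫ x in Ioi 0, |s + r / (2 * x ^ 2)| * Real.exp (-(s * x - r / (2 * x)) ^ 2)
      = ∫ x in Ioi 0, (s * Real.exp (-(s * x - r / (2 * x)) ^ 2)
        + (r / 2) * (Real.exp (-(s * x - r / (2 * x)) ^ 2) / x ^ 2)) := by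
    apply setIntegral_congr_fun measurableSet_Ioi
    intro x hx
    simp only [mem_Ioi] at hx
    have hx' : x ≠ 0 := hx.ne'
    simp only [abs_of_pos (show (0:ℝ) < s + r / (2 * x ^ 2) by positivity)]
    field_simp
  rw [M_val hs hr] at hsplit
  rw [integral_add ((hL_int hs hr).const_mul s) ((hK_int hs hr).const_mul (r/2)),
    integral_const_mul, integral_const_mul, KL hs hr, ← hL] at hsplit
  have hLval : L = Real.sqrt π / (2 * s) := by
    have : Real.sqrt π = 2 * s * L := by
      rw [hsplit]; field_simp; ring
    rw [this]; field_simp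
  rw [KL hs hr, ← hL, hLval]
  field_simp

/-- `∫₀^∞ e^{−s²t} e^{−r²/(4t)} / (4πt)^{3/2} dt = e^{−sr}/(4πr)` for `s, r > 0`. -/
theorem integral_heat_kernel_three_halves (s r : ℝ) (hs : 0 < s) (hr : 0 < r) :
    ∫ t in Set.Ioi (0 : ℝ),
        Real.exp (-s ^ 2 * t) * Real.exp (-r ^ 2 / (4 * t)) / (4 * π * t) ^ ((3 : ℝ) / 2)
      = Real.exp (-(s * r)) / (4 * π * r) := by
  have hsub := integral_comp_rpow_Ioi
    (fun t : ℝ => Real.exp (-s ^ 2 * t) * Real.exp (-r ^ 2 / (4 * t)) / (4 * π * t) ^ ((3 : ℝ) / 2))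
    (two_ne_zero (α := ℝ))
  rw [← hsub]
  have hcongr : ∀ x ∈ Ioi (0:ℝ),
      (|(2:ℝ)| * x ^ ((2:ℝ) - 1)) • ((fun t : ℝ => Real.exp (-s ^ 2 * t) *
        Real.exp (-r ^ 2 / (4 * t)) / (4 * π * t) ^ ((3 : ℝ) / 2)) (x ^ (2:ℝ)))
      = (2 * Real.exp (-(s * r)) / (4 * π) ^ ((3:ℝ)/2)) *
          (Real.exp (-(s * x - r / (2 * x)) ^ 2) / x ^ 2) := by
    intro x hx
    simp only [mem_Ioi] at hx
    have hx' : x ≠ 0 := hx.ne'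
    have hx2 : x ^ (2:ℝ) = x ^ 2 := by
      rw [show (2:ℝ) = ((2:ℕ):ℝ) by norm_num, Real.rpow_natCast]
    have hpow : (4 * π * x ^ 2) ^ ((3:ℝ)/2) = (4 * π) ^ ((3:ℝ)/2) * x ^ 3 := by
      rw [Real.mul_rpow (by positivity) (by positivity)]
      congr 1
      rw [← Real.rpow_natCast x 2, ← Real.rpow_mul hx.le, ← Real.rpow_natCast x 3]
      norm_num
    have hexp : Real.exp (-s ^ 2 * x ^ 2) * Real.exp (-r ^ 2 / (4 * x ^ 2))
        = Real.exp (-(s * r)) * Real.exp (-(s * x - r / (2 * x)) ^ 2) := by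
      rw [← Real.exp_add, ← Real.exp_add]
      congr 1
      field_simp
      ring
    rw [smul_eq_mul]
    simp only [hx2, hpow, hexp]
    have h4pi : (0:ℝ) < (4 * π) ^ ((3:ℝ)/2) := by
      apply Real.rpow_pos_of_pos; positivity
    rw [abs_of_pos (by norm_num : (0:ℝ) < 2), show (2:ℝ)-1 = 1 by norm_num, Real.rpow_one]
    field_simp
  rw [setIntegral_congr_fun measurableSet_Ioi hcongr, integral_const_mul, K_val hs hr]
  have hsqrt4 : Real.sqrt 4 = 2 := by
    rw [show (4:ℝ) = 2 ^ 2 by norm_num, Real.sqrt_sq (by norm_num)]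
  have h32 : ((4:ℝ) * π) ^ ((3:ℝ)/2) = 8 * π * Real.sqrt π := by
    rw [show (3:ℝ)/2 = 1 + 1/2 by norm_num, Real.rpow_add (by positivity), Real.rpow_one,
      ← Real.sqrt_eq_rpow, Real.sqrt_mul (by norm_num) π, hsqrt4]
    ring
  rw [h32]
  have hπ : (0:ℝ) < Real.sqrt π := Real.sqrt_pos.mpr pi_pos
  field_simp
  ring
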